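/- Let M be a matroid on a finite ground set E. Then the base polytope P(M) = conv{χ_B : B a base of M} ⊆ ℝ^E is a generalized permutohedron; in fact, for every edge [x,y] of P(M) there exist distinct elements i, j ∈ E with y - x = e_i - e_j. -/

import Mathlib

open Set

private lemma indicator_one_inj {E : Type} {B1 B2 : Set E}
    (h : B1.indicator (1 : E → ℝ) = B2.indicator 1) : B1 = B2 := by
  ext i
  have hi := congrFun h i
  by_cases h1 : i ∈ B1 <;> by_cases h2 : i ∈ B2 <;>
    simp [Set.indicator_apply, h1, h2] at hi ⊢

/-- Symmetric (strong) basis exchange for a matroid on a finite ground type. -/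
private lemma matroid_strong_exchange {E : Type} [Fintype E] {M : Matroid E} {B1 B2 : Set E}
    {a : E} (hB1 : M.IsBase B1) (hB2 : M.IsBase B2) (haB1 : a ∈ B1) (haB2 : a ∉ B2) :
    ∃ b, b ∈ B2 ∧ b ∉ B1 ∧ M.IsBase (insert b (B1 \ {a})) ∧ M.IsBase (insert a (B2 \ {b})) := by
  have haE : a ∈ M.E := hB1.subset_ground haB1
  have haclB2 : a ∈ M.closure B2 := by rw [hB2.closure_eq]; exact haE
  set S : Set ℕ := {n | ∃ C, C ⊆ B2 ∧ a ∈ M.closure C ∧ C.ncard = n} with hS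
  have hSne : S.Nonempty := ⟨B2.ncard, B2, Subset.rfl, haclB2, rfl⟩
  obtain ⟨C, hCB2, hCcl, hCn⟩ := Nat.sInf_mem hSne
  have hmin : ∀ b ∈ C, a ∉ M.closure (C \ {b}) := by
    intro b hb hcon
    have hmem : (C \ {b}).ncard ∈ S := ⟨C \ {b}, diff_subset.trans hCB2, hcon, rfl⟩
    have hle := Nat.sInf_le hmem
    have hlt : (C \ {b}).ncard < C.ncard := ncard_diff_singleton_lt_of_mem hb (toFinite C)
    omega
  have key1 : ∀ b ∈ C, a ∉ M.closure (B2 \ {b}) := by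
    intro b hb hcon
    have h1 : a ∈ M.closure (insert b (C \ {b})) := by
      rwa [insert_diff_singleton, insert_eq_of_mem hb]
    have h2 : b ∈ M.closure (insert a (C \ {b})) :=
      (Matroid.closure_exchange ⟨h1, hmin b hb⟩).1
    have h3 : insert a (C \ {b}) ⊆ M.closure (B2 \ {b}) := by
      refine insert_subset hcon ?_
      intro z hz
      exact M.subset_closure (B2 \ {b}) (diff_subset.trans hB2.subset_ground)
        ⟨hCB2 hz.1, hz.2⟩
    have h4 : M.closure (insert a (C \ {b})) ⊆ M.closure (B2 \ {b}) :=
      M.closure_subset_closure_of_subset_closure h3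
    exact hB2.indep.notMem_closure_sdiff_of_mem (hCB2 hb) (h4 h2)
  have key2 : ∃ b ∈ C, b ∉ M.closure (B1 \ {a}) := by
    by_contra hcon
    push_neg at hcon
    have hsub : C ⊆ M.closure (B1 \ {a}) := fun z hz => hcon z hz
    have h4 : M.closure C ⊆ M.closure (B1 \ {a}) :=
      M.closure_subset_closure_of_subset_closure hsub
    exact hB1.indep.notMem_closure_sdiff_of_mem haB1 (h4 hCcl)
  obtain ⟨b, hbC, hbcl⟩ := key2
  have hbB2 : b ∈ B2 := hCB2 hbC
  have hbB1 : b ∉ B1 := by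
    intro h
    have hba : b ≠ a := fun h' => haB2 (h' ▸ hbB2)
    exact hbcl (M.subset_closure (B1 \ {a}) (diff_subset.trans hB1.subset_ground) ⟨h, hba⟩)
  have hbE : b ∈ M.E := hB2.subset_ground hbB2
  have hInd1 : M.Indep (insert b (B1 \ {a})) := by
    have hd : M.Indep (B1 \ {a}) := hB1.indep.subset diff_subset
    rw [hd.insert_indep_iff_of_notMem (fun h => hbB1 h.1)]
    exact ⟨hbE, hbcl⟩
  have hBase1 : M.IsBase (insert b (B1 \ {a})) := hB1.exchange_isBase_of_indep hbB1 hInd1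
  have hInd2 : M.Indep (insert a (B2 \ {b})) := by
    have hd : M.Indep (B2 \ {b}) := hB2.indep.subset diff_subset
    rw [hd.insert_indep_iff_of_notMem (fun h => haB2 h.1)]
    exact ⟨haE, key1 b hbC⟩
  have hBase2 : M.IsBase (insert a (B2 \ {b})) := hB2.exchange_isBase_of_indep haB2 hInd2
  exact ⟨b, hbB2, hbB1, hBase1, hBase2⟩

/-- The left endpoint of an extreme segment with distinct endpoints is an extreme point. -/
private lemma left_endpoint_extremePoint {E : Type} {P : Set (E → ℝ)} {x y : E → ℝ}
    (hxy : x ≠ y) (hedge : IsExtreme ℝ P (segment ℝ x y)) :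
    x ∈ Set.extremePoints ℝ P := by
  have hxs : x ∈ segment ℝ x y := left_mem_segment ℝ x y
  refine ⟨hedge.1 hxs, fun x1 h1 x2 h2 hxo => ?_⟩
  obtain ⟨hx1s, hx2s⟩ := And.intro (hedge.2 h1 h2 hxs hxo)
    (hedge.right_mem_of_mem_openSegment h1 h2 hxs hxo)
  obtain ⟨a1, b1, ha1, hb1, hab1, hx1⟩ := hx1s
  obtain ⟨a2, b2, ha2, hb2, hab2, hx2⟩ := hx2s
  obtain ⟨u, v, hu, hv, huv, hx0⟩ := hxo
  obtain ⟨k, hk⟩ : ∃ k, y k - x k ≠ 0 := by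
    by_contra hcon
    push_neg at hcon
    exact hxy (funext fun k => by linarith [hcon k])
  have e1 := congrFun hx1 k
  have e2 := congrFun hx2 k
  have e0 := congrFun hx0 k
  simp only [Pi.add_apply, Pi.smul_apply, smul_eq_mul] at e1 e2 e0
  have h : (u * b1 + v * b2) * (y k - x k) = 0 := by
    linear_combination e0 + u * e1 + v * e2 - u * x k * hab1 - v * x k * hab2 - x k * huv
  have hb0 : u * b1 + v * b2 = 0 := by
    rcases mul_eq_zero.1 h with h' | h'
    · exact h'
    · exact absurd h' hk
  have hb1z : b1 = 0 := by nlinarith [mul_nonneg hu.le hb1, mul_nonneg hv.le hb2]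
  have hb2z : b2 = 0 := by nlinarith [mul_nonneg hu.le hb1, mul_nonneg hv.le hb2]
  have ha1' : a1 = 1 := by linarith
  have ha2' : a2 = 1 := by linarith
  rw [← hx1, hb1z, ha1']; simp

/-- The base polytope of a matroid on a finite ground set is a
generalized permutohedron: every edge `[x,y]` satisfies `y - x = e_i - e_j` for some
distinct `i, j`. -/
theorem matroid_base_polytope_generalized_permutohedron
    {E : Type} [Fintype E] [DecidableEq E] (M : Matroid E)
    (P : Set (E → ℝ))
    (hP : P = convexHull ℝ {x : E → ℝ | ∃ B : Set E, M.IsBase B ∧ x = B.indicator 1})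
    (x y : E → ℝ) (hxy : x ≠ y) (hedge : IsExtreme ℝ P (segment ℝ x y)) :
    ∃ i j : E, i ≠ j ∧ y - x = (Pi.single i 1 : E → ℝ) - Pi.single j 1 := by
  subst hP
  have hxep := left_endpoint_extremePoint hxy hedge
  have hedge' : IsExtreme ℝ
      (convexHull ℝ {x : E → ℝ | ∃ B : Set E, M.IsBase B ∧ x = B.indicator 1})
      (segment ℝ y x) := by rwa [segment_symm]
  have hyep := left_endpoint_extremePoint (Ne.symm hxy) hedge'
  obtain ⟨B1, hB1, hxeq⟩ := extremePoints_convexHull_subset hxep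
  obtain ⟨B2, hB2, hyeq⟩ := extremePoints_convexHull_subset hyep
  subst hxeq; subst hyeq
  have hB12 : B1 ≠ B2 := fun h => hxy (by rw [h])
  obtain ⟨a, haB1, haB2⟩ : ∃ a, a ∈ B1 ∧ a ∉ B2 := by
    by_contra hcon
    push_neg at hcon
    exact hB12 (hB1.eq_of_subset_isBase hB2 hcon)
  obtain ⟨b, hbB2, hbB1, hBase1, hBase2⟩ := matroid_strong_exchange hB1 hB2 haB1 haB2
  have hab : a ≠ b := fun h => haB2 (h ▸ hbB2)
  have hz1P : (insert b (B1 \ {a})).indicator (1 : E → ℝ) ∈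
      convexHull ℝ {x : E → ℝ | ∃ B : Set E, M.IsBase B ∧ x = B.indicator 1} :=
    subset_convexHull ℝ _ ⟨_, hBase1, rfl⟩
  have hz2P : (insert a (B2 \ {b})).indicator (1 : E → ℝ) ∈
      convexHull ℝ {x : E → ℝ | ∃ B : Set E, M.IsBase B ∧ x = B.indicator 1} :=
    subset_convexHull ℝ _ ⟨_, hBase2, rfl⟩
  have hanotz1 : a ∉ insert b (B1 \ {a}) := by
    intro h
    rcases h with h' | h'
    · exact hab h'
    · exact h'.2 rfl
  have hsum : (1/2 : ℝ) • (insert b (B1 \ {a})).indicator (1 : E → ℝ)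
      + (1/2 : ℝ) • (insert a (B2 \ {b})).indicator (1 : E → ℝ)
      = (1/2 : ℝ) • B1.indicator (1 : E → ℝ) + (1/2 : ℝ) • B2.indicator (1 : E → ℝ) := by
    funext i
    simp only [Pi.add_apply, Pi.smul_apply, smul_eq_mul]
    by_cases hia : i = a
    · subst hia
      simp [Set.indicator_apply, haB1, haB2, hab, hanotz1]
    · by_cases hib : i = b
      · subst hib
        simp [Set.indicator_apply, hbB1, hbB2, hab.symm]
      · have h1 : (i ∈ insert b (B1 \ {a})) ↔ i ∈ B1 := by
          simp [mem_insert_iff, hib, hia]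
        have h2 : (i ∈ insert a (B2 \ {b})) ↔ i ∈ B2 := by
          simp [mem_insert_iff, hib, hia]
        by_cases hi1 : i ∈ B1 <;> by_cases hi2 : i ∈ B2 <;>
          simp [Set.indicator_apply, h1, h2, hi1, hi2]
  have hmseg : (1/2 : ℝ) • B1.indicator (1 : E → ℝ) + (1/2 : ℝ) • B2.indicator (1 : E → ℝ)
      ∈ segment ℝ (B1.indicator (1 : E → ℝ)) (B2.indicator (1 : E → ℝ)) :=
    ⟨1/2, 1/2, by norm_num, by norm_num, by norm_num, rfl⟩
  have hz12 : (insert b (B1 \ {a})).indicator (1 : E → ℝ)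
      ≠ (insert a (B2 \ {b})).indicator (1 : E → ℝ) := by
    intro h
    have hBeq : insert b (B1 \ {a}) = insert a (B2 \ {b}) := indicator_one_inj h
    exact hanotz1 (hBeq ▸ mem_insert a _)
  have hopen : (1/2 : ℝ) • B1.indicator (1 : E → ℝ) + (1/2 : ℝ) • B2.indicator (1 : E → ℝ)
      ∈ openSegment ℝ ((insert b (B1 \ {a})).indicator (1 : E → ℝ))
        ((insert a (B2 \ {b})).indicator (1 : E → ℝ)) :=
    ⟨1/2, 1/2, by norm_num, by norm_num, by norm_num, hsum⟩
  have hz1seg := (hedge.2 hz1P hz2P hmseg hopen)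
  obtain ⟨t, s, ht, hs, hts, htz⟩ := hz1seg
  have ea := congrFun htz a
  simp only [Pi.add_apply, Pi.smul_apply, smul_eq_mul] at ea
  rw [Set.indicator_of_mem haB1, Set.indicator_of_notMem haB2,
    Set.indicator_of_notMem hanotz1] at ea
  simp only [Pi.one_apply] at ea
  have ht0 : t = 0 := by linarith [mul_nonneg ht (by norm_num : (0:ℝ) ≤ 1)]; 
  have hs1 : s = 1 := by linarith
  have hz1y : (insert b (B1 \ {a})).indicator (1 : E → ℝ) = B2.indicator 1 := by
    rw [← htz, ht0, hs1]; simp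
  have hB2eq : B2 = insert b (B1 \ {a}) := (indicator_one_inj hz1y).symm
  refine ⟨b, a, fun h => hbB1 (h ▸ haB1), ?_⟩
  funext i
  simp only [Pi.sub_apply, Pi.single_apply]
  by_cases hib : i = b
  · rw [hib]
    simp [Set.indicator_apply, hbB2, hbB1, hab.symm]
  · by_cases hia : i = a
    · rw [hia]
      simp [Set.indicator_apply, haB1, haB2, hab, hab.symm]
    · have h2 : (i ∈ B2) ↔ i ∈ B1 := by
        rw [hB2eq]; simp [mem_insert_iff, hib, hia]
      by_cases hi1 : i ∈ B1 <;> simp [Set.indicator_apply, h2, hi1, hib, hia]
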